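/- For every real number α > 0, the supremum over all Q > 0 of the quantity (exp(αQ/(1+αQ)) − 1)/Q equals α. -/

import Mathlib

open Real Filter Topology

lemma key_ub (α : ℝ) (hα : 0 < α) {Q : ℝ} (hQ : 0 < Q) :
    (Real.exp (α * Q / (1 + α * Q)) - 1) / Q ≤ α := by
  have hu : 0 < α * Q := mul_pos hα hQ
  have h1u : 0 < 1 + α * Q := by linarith
  have hlog : α * Q / (1 + α * Q) ≤ Real.log (1 + α * Q) := by
    have := Real.one_sub_inv_le_log_of_pos h1u
    have : 1 - (1 + α * Q)⁻¹ = α * Q / (1 + α * Q) := by field_simp; ring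
    linarith [Real.one_sub_inv_le_log_of_pos h1u, this ▸ Real.one_sub_inv_le_log_of_pos h1u]
  have hexp : Real.exp (α * Q / (1 + α * Q)) ≤ 1 + α * Q := by
    calc Real.exp (α * Q / (1 + α * Q)) ≤ Real.exp (Real.log (1 + α * Q)) :=
          Real.exp_le_exp.mpr hlog
      _ = 1 + α * Q := Real.exp_log h1u
  rw [div_le_iff₀ hQ]
  linarith

lemma key_lb (α : ℝ) (hα : 0 < α) {Q : ℝ} (hQ : 0 < Q) :
    α / (1 + α * Q) ≤ (Real.exp (α * Q / (1 + α * Q)) - 1) / Q := by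
  have hu : 0 < α * Q := mul_pos hα hQ
  have h1u : 0 < 1 + α * Q := by linarith
  have h := Real.add_one_le_exp (α * Q / (1 + α * Q))
  rw [div_le_div_iff₀ h1u hQ]
  have : α * Q / (1 + α * Q) ≤ Real.exp (α * Q / (1 + α * Q)) - 1 := by linarith
  calc α * Q = (α * Q / (1 + α * Q)) * (1 + α * Q) := by field_simp
    _ ≤ (Real.exp (α * Q / (1 + α * Q)) - 1) * (1 + α * Q) := by
        apply mul_le_mul_of_nonneg_right this (le_of_lt h1u)

/-- For every real `α > 0`, the supremum over all `Q > 0` of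
`(exp (α*Q/(1+α*Q)) - 1)/Q` equals `α`. -/
theorem stmt_0 (α : ℝ) (hα : 0 < α) :
    sSup {y : ℝ | ∃ Q : ℝ, 0 < Q ∧ y = (Real.exp (α * Q / (1 + α * Q)) - 1) / Q} = α := by
  set s := {y : ℝ | ∃ Q : ℝ, 0 < Q ∧ y = (Real.exp (α * Q / (1 + α * Q)) - 1) / Q}
  have hbdd : BddAbove s := ⟨α, fun y ⟨Q, hQ, hy⟩ => hy ▸ key_ub α hα hQ⟩
  apply le_antisymm
  · refine Real.sSup_le (fun y ⟨Q, hQ, hy⟩ => hy ▸ key_ub α hα hQ) hα.le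
  · -- α ≤ sSup s via limit argument
    have hmem : ∀ Q : ℝ, 0 < Q → α / (1 + α * Q) ≤ sSup s := by
      intro Q hQ
      calc α / (1 + α * Q) ≤ (Real.exp (α * Q / (1 + α * Q)) - 1) / Q := key_lb α hα hQ
        _ ≤ sSup s := le_csSup hbdd ⟨Q, hQ, rfl⟩
    have htend : Tendsto (fun Q : ℝ => α / (1 + α * Q)) (𝓝[>] 0) (𝓝 α) := by
      have : Tendsto (fun Q : ℝ => α / (1 + α * Q)) (𝓝 0) (𝓝 (α / (1 + α * 0))) := by
        apply Tendsto.div tendsto_const_nhds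
        · exact (tendsto_const_nhds.add ((continuous_const.mul continuous_id).tendsto 0))
        · norm_num
      simpa using this.mono_left nhdsWithin_le_nhds
    refine le_of_tendsto htend ?_
    filter_upwards [self_mem_nhdsWithin] with Q hQ
    exact hmem Q hQ
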